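/- arXiv:math-ph/9910017 — 4 statements merged into one kernel-verified Lean document; each statement's English description precedes it below -/
import Mathlib

section
/- For each n ≥ 2, the concatenation identity s_n s_{n+1} = s_{n+1} s_{n-1}^{a_n - 1} s_{n-2} s_{n-1} holds, where the words s_n over the alphabet {0,1} are defined by s_{-1} = 1, s_0 = 0, s_1 = s_0^{a_1-1} s_{-1}, and s_n = s_{n-1}^{a_n} s_{n-2} for n ≥ 2. -/
/-- k-fold concatenation of a word with itself. -/
def wpow (w : List ℕ) (k : ℕ) : List ℕ := (List.replicate k w).flatten

lemma wpow_succ (w : List ℕ) (k : ℕ) : wpow w (k + 1) = w ++ wpow w k := by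
  simp [wpow, List.replicate_succ]

lemma wpow_comm (w : List ℕ) (k : ℕ) : w ++ wpow w k = wpow w k ++ w := by
  induction k with
  | zero => simp [wpow]
  | succ k ih =>
      rw [wpow_succ, List.append_assoc, ih, ← List.append_assoc]

theorem sturmian_word_identity
    (a : ℤ → ℕ) (s : ℤ → List ℕ)
    (ha : ∀ n : ℤ, 1 ≤ n → 1 ≤ a n)
    (hm1 : s (-1) = [1]) (h0 : s 0 = [0])
    (h1 : s 1 = wpow (s 0) (a 1 - 1) ++ s (-1))
    (hrec : ∀ n : ℤ, 2 ≤ n → s n = wpow (s (n-1)) (a n) ++ s (n-2)) :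
    ∀ n : ℤ, 2 ≤ n →
      s n ++ s (n+1) =
        s (n+1) ++ wpow (s (n-1)) (a n - 1) ++ s (n-2) ++ s (n-1) := by
  intro n hn
  have h1' : 1 ≤ a n := ha n (by omega)
  have hk : a n = (a n - 1) + 1 := by omega
  have hrec1 : s (n+1) = wpow (s n) (a (n+1)) ++ s (n-1) := by
    have := hrec (n+1) (by omega)
    rw [show n+1-1 = n by ring, show n+1-2 = n-1 by ring] at this
    exact this
  have hrecn : s n = wpow (s (n-1)) (a n) ++ s (n-2) := hrec n hn
  calc s n ++ s (n+1)
      = s n ++ (wpow (s n) (a (n+1)) ++ s (n-1)) := by rw [hrec1]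
    _ = (s n ++ wpow (s n) (a (n+1))) ++ s (n-1) := by rw [List.append_assoc]
    _ = (wpow (s n) (a (n+1)) ++ s n) ++ s (n-1) := by rw [wpow_comm]
    _ = wpow (s n) (a (n+1)) ++ (s n ++ s (n-1)) := by rw [List.append_assoc]
    _ = wpow (s n) (a (n+1)) ++ ((wpow (s (n-1)) (a n) ++ s (n-2)) ++ s (n-1)) := by
        rw [← hrecn]
    _ = wpow (s n) (a (n+1)) ++ (((s (n-1) ++ wpow (s (n-1)) (a n - 1)) ++ s (n-2)) ++ s (n-1)) := by
        rw [← wpow_succ, ← hk]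
    _ = (wpow (s n) (a (n+1)) ++ s (n-1)) ++ wpow (s (n-1)) (a n - 1) ++ s (n-2) ++ s (n-1) := by
        simp [List.append_assoc]
    _ = s (n+1) ++ wpow (s (n-1)) (a n - 1) ++ s (n-2) ++ s (n-1) := by rw [← hrec1]
end

section
/- Let (U(n))_{n≥1} be a sequence of vectors in ℝ², and suppose there are integers k ≥ 1, l with 1 ≤ l ≤ k, and a constant C ≥ 1 such that for every j ∈ {1,…,l}, max(‖U(j+k)‖, ‖U(j+2k)‖) ≥ ‖U(j)‖/(2C). Then Σ_{m=1}^{l+2k} ‖U(m)‖² ≥ (1 + 1/(4C²)) Σ_{m=1}^{l} ‖U(m)‖². -/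
theorem mass_reproduction
    (U : ℕ → EuclideanSpace ℝ (Fin 2))
    (k l : ℕ) (hk : 1 ≤ k) (hl1 : 1 ≤ l) (hlk : l ≤ k)
    (C : ℝ) (hC : 1 ≤ C)
    (h : ∀ j ∈ Finset.Icc 1 l, ‖U j‖ / (2 * C) ≤ max ‖U (j + k)‖ ‖U (j + 2 * k)‖) :
    (1 + 1 / (4 * C ^ 2)) * ∑ m ∈ Finset.Icc 1 l, ‖U m‖ ^ 2 ≤
      ∑ m ∈ Finset.Icc 1 (l + 2 * k), ‖U m‖ ^ 2 := by
  have hC0 : (0:ℝ) < C := by linarith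
  have hIcc : ∀ n : ℕ, Finset.Icc 1 n = Finset.Ioc 0 n := by
    intro n; ext m; simp [Finset.mem_Icc, Finset.mem_Ioc]; omega
  have key : ∀ j ∈ Finset.Ioc 0 l,
      ‖U j‖ ^ 2 / (4 * C ^ 2) ≤ ‖U (j + k)‖ ^ 2 + ‖U (j + 2 * k)‖ ^ 2 := by
    intro j hj
    rw [Finset.mem_Ioc] at hj
    have h1 := h j (Finset.mem_Icc.mpr ⟨hj.1, hj.2⟩)
    have hd : 0 ≤ ‖U j‖ / (2 * C) := by positivity
    have heq : ‖U j‖ ^ 2 / (4 * C ^ 2) = (‖U j‖ / (2 * C)) ^ 2 := by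
      rw [div_pow]; congr 1; ring
    rcases le_max_iff.mp h1 with h' | h'
    · have := pow_le_pow_left₀ hd h' 2
      calc ‖U j‖ ^ 2 / (4 * C ^ 2) = (‖U j‖ / (2 * C)) ^ 2 := heq
        _ ≤ ‖U (j + k)‖ ^ 2 := this
        _ ≤ _ := le_add_of_nonneg_right (sq_nonneg _)
    · have := pow_le_pow_left₀ hd h' 2
      calc ‖U j‖ ^ 2 / (4 * C ^ 2) = (‖U j‖ / (2 * C)) ^ 2 := heq
        _ ≤ ‖U (j + 2 * k)‖ ^ 2 := this
        _ ≤ _ := le_add_of_nonneg_left (sq_nonneg _)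
  have e1 : ∑ j ∈ Finset.Ioc 0 l, ‖U (j + k)‖ ^ 2
      = ∑ m ∈ Finset.Ioc k (l + k), ‖U m‖ ^ 2 := by
    rw [show Finset.Ioc k (l + k) = Finset.Ioc (0 + k) (l + k) by rw [Nat.zero_add],
      ← Finset.map_add_right_Ioc, Finset.sum_map]
    simp [addRightEmbedding]
  have e2 : ∑ j ∈ Finset.Ioc 0 l, ‖U (j + 2 * k)‖ ^ 2
      = ∑ m ∈ Finset.Ioc (2 * k) (l + 2 * k), ‖U m‖ ^ 2 := by
    rw [show Finset.Ioc (2 * k) (l + 2 * k) = Finset.Ioc (0 + 2 * k) (l + 2 * k) by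
        rw [Nat.zero_add], ← Finset.map_add_right_Ioc, Finset.sum_map]
    simp [addRightEmbedding]
  have hdisj : Disjoint (Finset.Ioc k (l + k)) (Finset.Ioc (2 * k) (l + 2 * k)) := by
    rw [Finset.disjoint_left]
    intro m hm1 hm2
    rw [Finset.mem_Ioc] at hm1 hm2
    omega
  have tail : ∑ j ∈ Finset.Ioc 0 l, (‖U (j + k)‖ ^ 2 + ‖U (j + 2 * k)‖ ^ 2)
      ≤ ∑ m ∈ Finset.Ioc l (l + 2 * k), ‖U m‖ ^ 2 := by
    rw [Finset.sum_add_distrib, e1, e2, ← Finset.sum_union hdisj]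
    apply Finset.sum_le_sum_of_subset_of_nonneg
    · intro m hm
      rw [Finset.mem_union, Finset.mem_Ioc, Finset.mem_Ioc] at hm
      rw [Finset.mem_Ioc]
      omega
    · intros; positivity
  have sum_key : (∑ j ∈ Finset.Ioc 0 l, ‖U j‖ ^ 2) / (4 * C ^ 2)
      ≤ ∑ j ∈ Finset.Ioc 0 l, (‖U (j + k)‖ ^ 2 + ‖U (j + 2 * k)‖ ^ 2) := by
    rw [Finset.sum_div]
    exact Finset.sum_le_sum key
  have split : ∑ m ∈ Finset.Ioc 0 l, ‖U m‖ ^ 2 + ∑ m ∈ Finset.Ioc l (l + 2 * k), ‖U m‖ ^ 2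
      = ∑ m ∈ Finset.Ioc 0 (l + 2 * k), ‖U m‖ ^ 2 :=
    Finset.sum_Ioc_consecutive _ (Nat.zero_le l) (Nat.le_add_right l (2 * k))
  rw [hIcc, hIcc, ← split]
  have hexp : (1 + 1 / (4 * C ^ 2)) * ∑ m ∈ Finset.Ioc 0 l, ‖U m‖ ^ 2
      = ∑ m ∈ Finset.Ioc 0 l, ‖U m‖ ^ 2 + (∑ m ∈ Finset.Ioc 0 l, ‖U m‖ ^ 2) / (4 * C ^ 2) := by
    ring
  linarith [le_trans sum_key tail]
end

section
/- Let m⁺, m⁻ ∈ ℂ with Im(m⁺) > 0 and Im(m⁻) > 0, and suppose that for all φ ∈ ℝ, |(sin φ + cos φ · m⁺)/(cos φ - sin φ · m⁺)| ≤ K for some K ≥ 1. Then |(m⁺ + m⁻)/(1 - m⁺ m⁻)| ≤ K. -/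
open Complex

/-- Real-variable core lemma. -/
lemma m_fn_key (p q x y K : ℝ) (hq : 0 < q) (hy : 0 < y) (hK : 1 ≤ K)
    (hA : ∀ t : ℝ, ((t + p) ^ 2 + q ^ 2) ≤ K ^ 2 * ((1 - t * p) ^ 2 + (t * q) ^ 2))
    (h2 : 1 ≤ K ^ 2 * (p ^ 2 + q ^ 2)) :
    (p + x) ^ 2 + (q + y) ^ 2 ≤ K ^ 2 * ((1 - (p * x - q * y)) ^ 2 + (p * y + q * x) ^ 2) := by
  have hc : p ^ 2 + q ^ 2 - K ^ 2 ≤ 0 := by have h := hA 0; nlinarith [h]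
  have ha : 1 - K ^ 2 * (p ^ 2 + q ^ 2) ≤ 0 := by linarith
  have hquad : ∀ u : ℝ, 0 ≤ (K ^ 2 * (p ^ 2 + q ^ 2) - 1) * (u * u)
      + (-(2 * p * (1 + K ^ 2))) * u + (K ^ 2 - (p ^ 2 + q ^ 2)) := by
    intro u
    have h := hA u
    nlinarith [h]
  have hd : discrim (K ^ 2 * (p ^ 2 + q ^ 2) - 1) (-(2 * p * (1 + K ^ 2)))
      (K ^ 2 - (p ^ 2 + q ^ 2)) ≤ 0 := discrim_le_zero hquad
  rw [discrim] at hd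
  have hB2 : (p * (1 + K ^ 2)) ^ 2
      ≤ (1 - K ^ 2 * (p ^ 2 + q ^ 2)) * (p ^ 2 + q ^ 2 - K ^ 2) := by nlinarith [hd]
  have hK2 : 0 ≤ K ^ 2 - 1 := by nlinarith
  have hD : 0 ≤ q * (K ^ 2 - 1) := mul_nonneg hq.le hK2
  rcases ha.lt_or_eq with hlt | heq
  · nlinarith [sq_nonneg ((1 - K ^ 2 * (p ^ 2 + q ^ 2)) * x + p * (1 + K ^ 2)),
      sq_nonneg ((1 - K ^ 2 * (p ^ 2 + q ^ 2)) * y),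
      mul_nonneg (mul_nonneg (by linarith : (0:ℝ) ≤ K ^ 2 * (p ^ 2 + q ^ 2) - 1) hD) hy.le,
      hB2, hlt]
  · have hB0 : (p * (1 + K ^ 2)) ^ 2 ≤ 0 := by nlinarith [hB2, heq]
    have h0 : p * (1 + K ^ 2) = 0 :=
      pow_eq_zero_iff (by norm_num) |>.mp (le_antisymm hB0 (sq_nonneg _))
    have hp : p = 0 := by
      rcases mul_eq_zero.mp h0 with h | h
      · exact h
      · nlinarith [h]
    subst hp
    have hKq : K ^ 2 * q ^ 2 = 1 := by linear_combination -heq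
    have hKpos : (0 : ℝ) < K := by linarith
    have hq2 : q ^ 2 ≤ K ^ 2 := by nlinarith [hKq, sq_nonneg (K ^ 2 - 1), pow_pos hKpos 2]
    have ex : K ^ 2 * (q * x) ^ 2 = x ^ 2 := by linear_combination x ^ 2 * hKq
    have ey : K ^ 2 * (q * y) ^ 2 = y ^ 2 := by linear_combination y ^ 2 * hKq
    nlinarith [hq2, ex, ey, mul_nonneg (mul_pos hq hy).le hK2]

theorem m_function_bound
    (mp mm : ℂ) (hmp : 0 < mp.im) (hmm : 0 < mm.im)
    (K : ℝ) (hK : 1 ≤ K)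
    (hbd : ∀ φ : ℝ,
      ‖(Real.sin φ + Real.cos φ * mp) / (Real.cos φ - Real.sin φ * mp)‖ ≤ K) :
    ‖(mp + mm) / (1 - mp * mm)‖ ≤ K := by
  have hmp0 : mp ≠ 0 := by
    intro h0; rw [h0] at hmp; simp at hmp
  -- Step 1: bound for all real t
  have h1 : ∀ t : ℝ, ‖(t : ℂ) + mp‖ ≤ K * ‖1 - (t : ℂ) * mp‖ := by
    intro t
    have hcpos : 0 < Real.cos (Real.arctan t) := Real.cos_arctan_pos t
    have hs : Real.sin (Real.arctan t) = t * Real.cos (Real.arctan t) := by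
      have := Real.tan_arctan t
      rw [Real.tan_eq_sin_div_cos] at this
      field_simp at this
      linarith [this]
    have h := hbd (Real.arctan t)
    rw [hs] at h
    have hden : (1 : ℂ) - (t : ℂ) * mp ≠ 0 := by
      intro h0
      have him : t * mp.im = 0 := by
        have := congrArg Complex.im h0
        simpa using this
      rcases mul_eq_zero.mp him with ht | hq
      · rw [ht] at h0; simp at h0
      · exact absurd hq (ne_of_gt hmp)
    have hc0 : (Real.cos (Real.arctan t) : ℂ) ≠ 0 := by
      exact_mod_cast hcpos.ne'
    have e : ((↑(t * Real.cos (Real.arctan t)) : ℂ) + ↑(Real.cos (Real.arctan t)) * mp) /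
        (↑(Real.cos (Real.arctan t)) - ↑(t * Real.cos (Real.arctan t)) * mp)
        = ((t : ℂ) + mp) / (1 - (t : ℂ) * mp) := by
      rw [Complex.ofReal_mul]
      rw [show (t : ℂ) * (Real.cos (Real.arctan t) : ℂ) + (Real.cos (Real.arctan t) : ℂ) * mp
          = (Real.cos (Real.arctan t) : ℂ) * ((t : ℂ) + mp) by ring,
        show (Real.cos (Real.arctan t) : ℂ) - (t : ℂ) * (Real.cos (Real.arctan t) : ℂ) * mp
          = (Real.cos (Real.arctan t) : ℂ) * (1 - (t : ℂ) * mp) by ring,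
        mul_div_mul_left _ _ hc0]
    rw [e, norm_div] at h
    exact (div_le_iff₀ (norm_pos_iff.mpr hden)).mp h
  -- Step 2: bound at infinity
  have h2 : 1 ≤ K * ‖mp‖ := by
    have h := hbd (Real.pi / 2)
    rw [Real.sin_pi_div_two, Real.cos_pi_div_two] at h
    have e : ((1 : ℝ) : ℂ) + ((0 : ℝ) : ℂ) * mp = 1 := by push_cast; ring
    have e2 : ((0 : ℝ) : ℂ) - ((1 : ℝ) : ℂ) * mp = -mp := by push_cast; ring
    rw [e, e2, norm_div, norm_one, norm_neg] at h
    have hpos : 0 < ‖mp‖ := norm_pos_iff.mpr hmp0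
    rw [div_le_iff₀ hpos] at h
    linarith [h]
  -- squared versions
  have hA : ∀ t : ℝ, ((t + mp.re) ^ 2 + mp.im ^ 2) ≤ K ^ 2 * ((1 - t * mp.re) ^ 2 + (t * mp.im) ^ 2) := by
    intro t
    have h := h1 t
    have hsq := mul_self_le_mul_self (norm_nonneg _) h
    have e1 : ‖(t : ℂ) + mp‖ ^ 2 = (t + mp.re) ^ 2 + mp.im ^ 2 := by
      rw [Complex.sq_norm]
      simp [Complex.normSq_apply]
      ring
    have e2 : ‖1 - (t : ℂ) * mp‖ ^ 2 = (1 - t * mp.re) ^ 2 + (t * mp.im) ^ 2 := by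
      rw [Complex.sq_norm]
      simp [Complex.normSq_apply]
      ring
    nlinarith [hsq, e1, e2, norm_nonneg (1 - (t : ℂ) * mp), norm_nonneg ((t:ℂ)+mp)]
  have h2sq : 1 ≤ K ^ 2 * (mp.re ^ 2 + mp.im ^ 2) := by
    have e : ‖mp‖ ^ 2 = mp.re ^ 2 + mp.im ^ 2 := by
      rw [Complex.sq_norm]
      simp [Complex.normSq_apply]; ring
    nlinarith [mul_self_le_mul_self (by linarith : (0:ℝ) ≤ 1) h2, e, norm_nonneg mp]
  have main := m_fn_key mp.re mp.im mm.re mm.im K hmp hmm hK hA h2sq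
  -- finish
  by_cases hd0 : (1 : ℂ) - mp * mm = 0
  · rw [hd0, div_zero, norm_zero]; linarith
  · rw [norm_div, div_le_iff₀ (norm_pos_iff.mpr hd0)]
    have hKpos : (0 : ℝ) ≤ K := by linarith
    have mnorm : Complex.normSq (mp + mm) ≤ K ^ 2 * Complex.normSq (1 - mp * mm) := by
      simp only [Complex.normSq_apply, Complex.add_re, Complex.add_im, Complex.sub_re,
        Complex.sub_im, Complex.mul_re, Complex.mul_im, Complex.one_re, Complex.one_im]
      nlinarith [main]
    calc ‖mp + mm‖ = Real.sqrt (Complex.normSq (mp + mm)) := Complex.norm_def _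
      _ ≤ Real.sqrt (K ^ 2 * Complex.normSq (1 - mp * mm)) := Real.sqrt_le_sqrt mnorm
      _ = K * ‖1 - mp * mm‖ := by
          rw [Real.sqrt_mul (sq_nonneg K), Real.sqrt_sq hKpos, Complex.norm_def]
end

section
/- Let w be a finite word over {0,1} of length k, and suppose a two-sided sequence f : ℤ → {0,1} satisfies f(j) f(j+1) ⋯ f(j+2k-1) = w' w' for some cyclic permutation (conjugate) w' of w, for every j ∈ {1,…,l} with l ≤ k. Let M(w) denote the transfer matrix product over w at fixed (λ, E) with |tr M(w')| ≤ C for every conjugate w' of w, where C ≥ 1. If u : ℤ → ℂ solves u(n+1) + u(n-1) + λ f(n) u(n) = E u(n), then ‖U‖_{l+2k}² ≥ (1 + 1/(4C²)) ‖U‖_l², where U(n) = (u(n), u(n-1)) and ‖U‖_m² = Σ_{n=1}^m ‖U(n)‖². -/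
/-- Single-site transfer matrix. -/
def Tmat (lam E : ℝ) (c : ℕ) : Matrix (Fin 2) (Fin 2) ℝ :=
  !![E - lam * c, -1; 1, 0]

/-- Transfer matrix over a word, multiplied right to left. -/
def Mword (lam E : ℝ) (w : List ℕ) : Matrix (Fin 2) (Fin 2) ℝ :=
  (w.reverse.map (Tmat lam E)).prod

/-- Complex version of the single-site transfer matrix. -/
noncomputable def TmatC (lam E : ℝ) (c : ℕ) : Matrix (Fin 2) (Fin 2) ℂ :=
  !![(E:ℂ) - (lam:ℂ) * c, -1; 1, 0]

/-- Complex version of the word transfer matrix. -/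
noncomputable def MwordC (lam E : ℝ) (w : List ℕ) : Matrix (Fin 2) (Fin 2) ℂ :=
  (w.reverse.map (TmatC lam E)).prod

/-- The solution vector `U(n) = (u n, u (n-1))`. -/
noncomputable def Vec (u : ℤ → ℂ) (n : ℤ) : Fin 2 → ℂ := ![u n, u (n-1)]

lemma step_transfer (lam E : ℝ) (f : ℤ → ℕ) (u : ℤ → ℂ)
    (hsol : ∀ n : ℤ, u (n + 1) + u (n - 1) + (lam : ℂ) * (f n : ℂ) * u n = (E : ℂ) * u n)
    (n : ℤ) : Vec u (n+1) = (TmatC lam E (f n)).mulVec (Vec u n) := by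
  funext i
  fin_cases i
  · have h := hsol n
    simp [Vec, TmatC, Matrix.mulVec, dotProduct, Fin.sum_univ_two]
    linear_combination h
  · simp [Vec, TmatC, Matrix.mulVec, dotProduct, Fin.sum_univ_two]

lemma MwordC_cons (lam E : ℝ) (c : ℕ) (L : List ℕ) :
    MwordC lam E (c :: L) = MwordC lam E L * TmatC lam E c := by
  simp [MwordC]

lemma transfer (lam E : ℝ) (f : ℤ → ℕ) (u : ℤ → ℂ)
    (hsol : ∀ n : ℤ, u (n + 1) + u (n - 1) + (lam : ℂ) * (f n : ℂ) * u n = (E : ℂ) * u n)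
    (L : List ℕ) : ∀ j : ℤ, (∀ (m : ℕ) (hm : m < L.length), f (j + (m:ℤ)) = L[m]) →
    Vec u (j + (L.length : ℤ)) = (MwordC lam E L).mulVec (Vec u j) := by
  induction L with
  | nil => intro j _; simp [MwordC]
  | cons c L' ih =>
    intro j h
    have h0 : f j = c := by have := h 0 (by simp); rwa [Nat.cast_zero, add_zero] at this
    have hrest : ∀ (m : ℕ) (hm : m < L'.length), f ((j+1) + (m:ℤ)) = L'[m] := by
      intro m hm
      have := h (m+1) (by simpa using Nat.succ_lt_succ hm)
      simpa [add_assoc, add_comm, add_left_comm] using this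
    have hIH := ih (j+1) hrest
    have hcast : j + ((c :: L').length : ℤ) = (j+1) + (L'.length : ℤ) := by
      simp; ring
    rw [hcast, hIH, step_transfer lam E f u hsol j, h0, MwordC_cons, Matrix.mulVec_mulVec]

lemma ch2 (M : Matrix (Fin 2) (Fin 2) ℂ) (h : M.det = 1) :
    M * M = M.trace • M - 1 := by
  rw [Matrix.det_fin_two] at h
  ext i j
  fin_cases i <;> fin_cases j <;>
    simp [Matrix.mul_apply, Matrix.trace_fin_two, Fin.sum_univ_two, Matrix.one_apply] <;>
    first
    | ring1
    | linear_combination -h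

lemma det_MwordC (lam E : ℝ) (L : List ℕ) : (MwordC lam E L).det = 1 := by
  unfold MwordC
  generalize L.reverse = l
  induction l with
  | nil => simp
  | cons c t ih =>
    simp only [List.map_cons, List.prod_cons, Matrix.det_mul, ih, mul_one]
    simp [TmatC, Matrix.det_fin_two_of]

lemma MwordC_eq (lam E : ℝ) (L : List ℕ) :
    MwordC lam E L = (Mword lam E L).map Complex.ofReal := by
  unfold MwordC Mword
  rw [show ((L.reverse.map (Tmat lam E)).prod).map Complex.ofReal
      = (Complex.ofRealHom.mapMatrix : Matrix (Fin 2) (Fin 2) ℝ →+* _)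
        ((L.reverse.map (Tmat lam E)).prod) from rfl,
    map_list_prod, List.map_map]
  congr 1
  apply List.map_congr_left
  intro c _
  ext i j
  fin_cases i <;> fin_cases j <;>
    simp [Tmat, TmatC, Matrix.map_apply]

lemma trace_MwordC (lam E : ℝ) (L : List ℕ) :
    (MwordC lam E L).trace = ((Mword lam E L).trace : ℂ) := by
  rw [MwordC_eq]
  simp [Matrix.trace, Matrix.diag, Matrix.map_apply]

theorem gordon_square_criterion
    (lam E : ℝ) (w : List ℕ) (hw01 : ∀ c ∈ w, c = 0 ∨ c = 1)
    (k : ℕ) (hk : w.length = k) (hkpos : 1 ≤ k)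
    (l : ℕ) (hl1 : 1 ≤ l) (hlk : l ≤ k)
    (f : ℤ → ℕ) (hf01 : ∀ n, f n = 0 ∨ f n = 1)
    (hsquares : ∀ j : ℤ, 1 ≤ j → j ≤ (l : ℤ) →
      ∃ i : ℕ, (List.ofFn fun m : Fin (2 * k) => f (j + (m : ℕ))) =
        (w.rotate i) ++ (w.rotate i))
    (C : ℝ) (hC : 1 ≤ C)
    (htr : ∀ i : ℕ, |(Mword lam E (w.rotate i)).trace| ≤ C)
    (u : ℤ → ℂ)
    (hsol : ∀ n : ℤ, u (n + 1) + u (n - 1) + (lam : ℂ) * (f n : ℂ) * u n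
      = (E : ℂ) * u n) :
    (1 + 1 / (4 * C ^ 2)) *
      (∑ n ∈ Finset.Icc (1 : ℤ) (l : ℤ),
        (‖u n‖ ^ 2 + ‖u (n - 1)‖ ^ 2)) ≤
    ∑ n ∈ Finset.Icc (1 : ℤ) ((l : ℤ) + 2 * (k : ℤ)),
      (‖u n‖ ^ 2 + ‖u (n - 1)‖ ^ 2) := by
  set N : ℤ → ℝ := fun n => ‖u n‖ ^ 2 + ‖u (n - 1)‖ ^ 2 with hNdef
  have hN0 : ∀ n, 0 ≤ N n := fun n => by positivity
  have hC0 : (0:ℝ) < C := lt_of_lt_of_le one_pos hC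
  -- the key pointwise estimate
  have key : ∀ j : ℤ, 1 ≤ j → j ≤ (l:ℤ) →
      N j ≤ 2*C^2 * (N (j + (k:ℤ)) + N (j + 2*(k:ℤ))) := by
    intro j hj1 hj2
    obtain ⟨i, hi⟩ := hsquares j hj1 hj2
    set r := w.rotate i with hrdef
    have hrlen : r.length = k := by simp [hrdef, hk]
    have hlen2 : (r ++ r).length = 2*k := by simp [hrlen]; ring
    have hent : ∀ (m : ℕ) (hm : m < 2*k),
        f (j + (m:ℤ)) = (r ++ r)[m]'(by omega) := by
      intro m hm
      have hm' : m < (List.ofFn fun m : Fin (2 * k) => f (j + (m : ℕ))).length := by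
        simpa using hm
      have hm'' : m < (r ++ r).length := by omega
      have hsome : (List.ofFn fun m : Fin (2 * k) => f (j + (m : ℕ)))[m]? = (r ++ r)[m]? := by
        rw [hi]
      rw [List.getElem?_eq_getElem hm', List.getElem?_eq_getElem hm''] at hsome
      have h3 := Option.some.inj hsome
      rw [List.getElem_ofFn] at h3
      simpa using h3
    -- entries of first copy
    have h1 : ∀ (m : ℕ) (hm : m < r.length), f (j + (m:ℤ)) = r[m] := by
      intro m hm
      rw [hent m (by omega)]
      exact List.getElem_append_left hm
    -- entries of second copy
    have h2 : ∀ (m : ℕ) (hm : m < r.length), f ((j + (k:ℤ)) + (m:ℤ)) = r[m] := by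
      intro m hm
      have hlt : k + m < 2*k := by omega
      have := hent (k + m) hlt
      have hidx : (j + (k:ℤ)) + (m:ℤ) = j + ((k + m : ℕ) : ℤ) := by push_cast; ring
      rw [hidx, this, List.getElem_append_right (by omega)]
      congr 1
      omega
    set M := MwordC lam E r with hM
    have V1 : Vec u (j + (k:ℤ)) = M.mulVec (Vec u j) := by
      have := transfer lam E f u hsol r j h1
      rwa [hrlen] at this
    have V2 : Vec u (j + 2*(k:ℤ)) = M.mulVec (Vec u (j + (k:ℤ))) := by
      have := transfer lam E f u hsol r (j + (k:ℤ)) h2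
      rw [hrlen] at this
      rwa [show j + 2*(k:ℤ) = (j + (k:ℤ)) + (k:ℤ) by ring]
    have hch := ch2 M (det_MwordC lam E r)
    have Vrel : Vec u j = M.trace • Vec u (j + (k:ℤ)) - Vec u (j + 2*(k:ℤ)) := by
      rw [V2, V1, Matrix.mulVec_mulVec, hch, Matrix.sub_mulVec,
        Matrix.smul_mulVec, Matrix.one_mulVec, ← V1]
      abel
    set t := (Mword lam E r).trace with ht
    have htC : |t| ≤ C := htr i
    have habs : ∀ i : Fin 2, ‖Vec u j i‖ ≤
        C * ‖Vec u (j + (k:ℤ)) i‖ + ‖Vec u (j + 2*(k:ℤ)) i‖ := by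
      intro i
      have htrace : M.trace = ((t : ℝ) : ℂ) := by rw [hM, trace_MwordC, ht]
      have hv : Vec u j i = (t:ℂ) * Vec u (j + (k:ℤ)) i - Vec u (j + 2*(k:ℤ)) i := by
        rw [Vrel, htrace]
        simp [Pi.sub_apply, Pi.smul_apply, smul_eq_mul]
      rw [hv]
      calc ‖(t:ℂ) * Vec u (j + (k:ℤ)) i - Vec u (j + 2*(k:ℤ)) i‖
          ≤ ‖(t:ℂ) * Vec u (j + (k:ℤ)) i‖ + ‖Vec u (j + 2*(k:ℤ)) i‖ := by
            simpa [sub_eq_add_neg] using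
              norm_add_le ((t:ℂ) * Vec u (j + (k:ℤ)) i) (-(Vec u (j + 2*(k:ℤ)) i))
        _ ≤ C * ‖Vec u (j + (k:ℤ)) i‖ + ‖Vec u (j + 2*(k:ℤ)) i‖ := by
            rw [norm_mul, Complex.norm_real, Real.norm_eq_abs]
            gcongr
    have sq_bound : ∀ x y z : ℝ, 0 ≤ x → 0 ≤ y → 0 ≤ z → x ≤ C*y + z →
        x^2 ≤ 2*C^2*(y^2+z^2) := by
      intro x y z hx hy hz hxyz
      have hC2 : 1 ≤ C^2 := by nlinarith
      nlinarith [sq_nonneg (C*y - z), mul_self_le_mul_self hx hxyz,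
        mul_nonneg hy hz, sq_nonneg y, sq_nonneg z]
    have hA0 := habs 0
    have hA1 := habs 1
    simp only [Vec, Matrix.cons_val_zero, Matrix.cons_val_one, Matrix.head_cons] at hA0 hA1
    have hb0 := sq_bound _ _ _ (norm_nonneg _)
      (by positivity) (norm_nonneg _) hA0
    have hb1 := sq_bound _ _ _ (norm_nonneg _)
      (by positivity) (norm_nonneg _) hA1
    simp only [hNdef]
    nlinarith [hb0, hb1]
  -- summation
  have hlk' : (l:ℤ) ≤ (k:ℤ) := by exact_mod_cast hlk
  have hk' : (1:ℤ) ≤ (k:ℤ) := by exact_mod_cast hkpos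
  have hl' : (1:ℤ) ≤ (l:ℤ) := by exact_mod_cast hl1
  have hsum1 : ∑ j ∈ Finset.Icc (1:ℤ) (l:ℤ), N (j + (k:ℤ))
      = ∑ n ∈ Finset.Icc (1 + (k:ℤ)) ((l:ℤ) + k), N n := by
    rw [← Finset.map_add_right_Icc, Finset.sum_map]
    simp [addRightEmbedding]
  have hsum2 : ∑ j ∈ Finset.Icc (1:ℤ) (l:ℤ), N (j + 2*(k:ℤ))
      = ∑ n ∈ Finset.Icc (1 + 2*(k:ℤ)) ((l:ℤ) + 2*k), N n := by
    rw [← Finset.map_add_right_Icc, Finset.sum_map]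
    simp [addRightEmbedding]
  have hdisj : Disjoint (Finset.Icc (1 + (k:ℤ)) ((l:ℤ) + k))
      (Finset.Icc (1 + 2*(k:ℤ)) ((l:ℤ) + 2*k)) := by
    rw [Finset.disjoint_left]
    intro x hx hx'
    simp only [Finset.mem_Icc] at hx hx'
    omega
  have hsubset : Finset.Icc (1 + (k:ℤ)) ((l:ℤ) + k) ∪
      Finset.Icc (1 + 2*(k:ℤ)) ((l:ℤ) + 2*k) ⊆ Finset.Icc ((l:ℤ) + 1) ((l:ℤ) + 2*k) := by
    intro x hx
    simp only [Finset.mem_union, Finset.mem_Icc] at hx ⊢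
    omega
  have hmain : ∑ j ∈ Finset.Icc (1:ℤ) (l:ℤ), N j ≤
      2*C^2 * ∑ n ∈ Finset.Icc ((l:ℤ) + 1) ((l:ℤ) + 2*k), N n := by
    calc ∑ j ∈ Finset.Icc (1:ℤ) (l:ℤ), N j
        ≤ ∑ j ∈ Finset.Icc (1:ℤ) (l:ℤ), 2*C^2 * (N (j + (k:ℤ)) + N (j + 2*(k:ℤ))) := by
          apply Finset.sum_le_sum
          intro j hj
          simp only [Finset.mem_Icc] at hj
          exact key j hj.1 hj.2
      _ = 2*C^2 * (∑ n ∈ Finset.Icc (1 + (k:ℤ)) ((l:ℤ) + k), N n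
            + ∑ n ∈ Finset.Icc (1 + 2*(k:ℤ)) ((l:ℤ) + 2*k), N n) := by
          rw [← Finset.mul_sum, Finset.sum_add_distrib, hsum1, hsum2]
      _ = 2*C^2 * ∑ n ∈ Finset.Icc (1 + (k:ℤ)) ((l:ℤ) + k) ∪
            Finset.Icc (1 + 2*(k:ℤ)) ((l:ℤ) + 2*k), N n := by
          rw [Finset.sum_union hdisj]
      _ ≤ 2*C^2 * ∑ n ∈ Finset.Icc ((l:ℤ) + 1) ((l:ℤ) + 2*k), N n := by
          apply mul_le_mul_of_nonneg_left _ (by positivity)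
          exact Finset.sum_le_sum_of_subset_of_nonneg hsubset (fun n _ _ => hN0 n)
  have hsplit : ∑ n ∈ Finset.Icc (1:ℤ) ((l:ℤ) + 2*k), N n
      = ∑ n ∈ Finset.Icc (1:ℤ) (l:ℤ), N n
        + ∑ n ∈ Finset.Icc ((l:ℤ) + 1) ((l:ℤ) + 2*k), N n := by
    rw [← Finset.sum_union (by
      rw [Finset.disjoint_left]
      intro x hx hx'
      simp only [Finset.mem_Icc] at hx hx'
      omega)]
    congr 1
    ext x
    simp only [Finset.mem_union, Finset.mem_Icc]
    omega
  set S1 := ∑ n ∈ Finset.Icc (1:ℤ) (l:ℤ), N n with hS1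
  set B := ∑ n ∈ Finset.Icc ((l:ℤ) + 1) ((l:ℤ) + 2*k), N n with hB
  have hS1nn : 0 ≤ S1 := Finset.sum_nonneg (fun n _ => hN0 n)
  have hBnn : 0 ≤ B := Finset.sum_nonneg (fun n _ => hN0 n)
  have h4 : (0:ℝ) < 4*C^2 := by positivity
  have hfrac : 1/(4*C^2) * S1 ≤ B := by
    rw [div_mul_eq_mul_div, one_mul, div_le_iff₀ h4]
    nlinarith [hmain, mul_nonneg (sq_nonneg C) hBnn]
  calc (1 + 1/(4*C^2)) * S1 = S1 + 1/(4*C^2) * S1 := by ring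
    _ ≤ S1 + B := by linarith
    _ = ∑ n ∈ Finset.Icc (1:ℤ) ((l:ℤ) + 2*k), N n := hsplit.symm
end
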